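/- For every real number α with 0 < α < 1 and every x ≥ 0, one has (αe)^{-1/α} · e^{x^α} - x ≥ 0. -/
import Mathlib


theorem stmt_0 (α x : ℝ) (hα : 0 < α) (hα1 : α < 1) (hx : 0 ≤ x) :
    0 ≤ (α * Real.exp 1) ^ (-(1 / α)) * Real.exp (x ^ α) - x := by
  rcases eq_or_lt_of_le hx with h | h
  · rw [← h]
    have : (0:ℝ) < (α * Real.exp 1) ^ (-(1 / α)) * Real.exp ((0:ℝ) ^ α) := by positivity
    linarith
  · have hae : (0:ℝ) < α * Real.exp 1 := by positivity
    have hpow : x ^ α = Real.exp (α * Real.log x) := by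
      rw [Real.rpow_def_of_pos h, mul_comm]
    have hbase : (α * Real.exp 1) ^ (-(1 / α)) = Real.exp (-(1 / α) * (Real.log α + 1)) := by
      rw [Real.rpow_def_of_pos hae, Real.log_mul hα.ne' (Real.exp_pos 1).ne', Real.log_exp]
      ring_nf
    have key : Real.log α + α * Real.log x + 1 ≤ α * Real.exp (α * Real.log x) := by
      have h1 := Real.add_one_le_exp (Real.log α + α * Real.log x)
      rwa [Real.exp_add, Real.exp_log hα] at h1
    have h2 : Real.log x ≤ Real.exp (α * Real.log x) - 1 / α * (Real.log α + 1) := by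
      rw [le_sub_iff_add_le, ← sub_nonneg]
      have heq : Real.exp (α * Real.log x) - (Real.log x + 1 / α * (Real.log α + 1)) =
          (α * Real.exp (α * Real.log x) - (Real.log α + α * Real.log x + 1)) / α := by
        field_simp
        ring
      rw [heq]
      exact div_nonneg (by linarith) hα.le
    rw [sub_nonneg, hbase, hpow, ← Real.exp_add]
    conv_lhs => rw [← Real.exp_log h]
    exact Real.exp_le_exp.mpr (by linarith)
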